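/- If V ⊆ S¹×S¹ is a symmetric open set and s : V → PS¹ is a symmetric motion planning rule, then there is a continuous function d : ρ⁻¹(V) → ℤ such that for all points of its domain: d(t,1) − d(t,0) = −1, d(1,t) − d(0,t) = 1, and d(t',t) = −d(t,t'). -/

import Mathlib

open unitInterval Real

noncomputable section WindingTheory

namespace SqMPR

open Complex (arg)
open Set Finset

/-! ### Elementary circle lemmas -/

lemma circle_ne_neg_of_dist_lt {a b : Circle} (h : dist a b < 2) : (a : ℂ) ≠ -(b : ℂ) := by
  intro hab
  rw [show dist a b = dist (a:ℂ) (b:ℂ) from rfl, Complex.dist_eq, hab] at h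
  have h2 : (-(b : ℂ)) - (b : ℂ) = -(2 * b) := by ring
  rw [h2, norm_neg, norm_mul] at h
  simp [Circle.norm_coe] at h

lemma circle_mem_slitPlane {c : Circle} (h : (c : ℂ) ≠ -1) : (c : ℂ) ∈ Complex.slitPlane := by
  rw [Complex.mem_slitPlane_iff_arg]
  refine ⟨fun hπ => ?_, c.coe_ne_zero⟩
  rw [Complex.arg_eq_pi_iff] at hπ
  apply h
  have him : (c : ℂ) = ((c : ℂ).re : ℂ) := by
    apply Complex.ext <;> simp [hπ.2]
  have habs := Circle.norm_coe c
  rw [him, Complex.norm_real, Real.norm_eq_abs] at habs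
  have : (c : ℂ).re = -1 := by
    rcases abs_cases ((c : ℂ).re) with ⟨h1, _⟩ | ⟨h1, _⟩ <;> linarith [hπ.1]
  rw [him, this]
  norm_num

lemma div_coe_eq_neg_one_iff (z w : Circle) : ((z / w : Circle) : ℂ) = -1 ↔ (z : ℂ) = -(w : ℂ) := by
  rw [Circle.coe_div, div_eq_iff w.coe_ne_zero, neg_one_mul]

lemma div_mono_aux {x y c : ℝ} (h : x ≤ y) (hc : 0 < c) : x / c ≤ y / c := by
  rw [div_eq_mul_inv, div_eq_mul_inv]
  exact mul_le_mul_of_nonneg_right h (by positivity)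

lemma cexp_sub (x y : ℝ) : Circle.exp (x - y) = Circle.exp x / Circle.exp y := by
  apply Subtype.ext
  rw [Circle.coe_div, Circle.coe_exp, Circle.coe_exp, Circle.coe_exp, ← Complex.exp_sub]
  congr 1
  push_cast
  ring

lemma cexp_sum {α : Type*} (s : Finset α) (g : α → ℝ) :
    Circle.exp (∑ i ∈ s, g i) = ∏ i ∈ s, Circle.exp (g i) := by
  classical
  induction s using Finset.cons_induction with
  | empty => simp
  | cons a s ha ih => rw [Finset.sum_cons, Finset.prod_cons, Circle.exp_add, ih]

/-! ### The arg-increment sum -/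

/-- Sum of argument increments of `f` along the uniform partition of `[0,1]` into `n` pieces. -/
def Sarg (f : ℝ → Circle) (n : ℕ) : ℝ :=
  ∑ k ∈ Finset.range n, arg ((f (((k : ℝ) + 1) / n) / f ((k : ℝ) / n) : Circle) : ℂ)

/-- `n` is a valid mesh for `f` on `[0,1]`: points at distance `≤ 1/n` are never antipodal. -/
def SValid (f : ℝ → Circle) (n : ℕ) : Prop :=
  0 < n ∧ ∀ u v : ℝ, u ∈ Icc (0:ℝ) 1 → v ∈ Icc (0:ℝ) 1 → |u - v| ≤ 1 / n →
    (f u : ℂ) ≠ -(f v : ℂ)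

/-- Key lemma: on an interval with no antipodal pairs, differences of the local `arg`-lift
compute the arg of the corresponding ratio. -/
lemma arg_sub_arg (f : ℝ → Circle) (hf : Continuous f) {a b : ℝ}
    (hsep : ∀ u v, u ∈ Icc a b → v ∈ Icc a b → (f u : ℂ) ≠ -(f v : ℂ))
    {u v : ℝ} (hu : u ∈ Icc a b) (hv : v ∈ Icc a b) (huv : u ≤ v) :
    arg ((f v / f a : Circle) : ℂ) - arg ((f u / f a : Circle) : ℂ)
      = arg ((f v / f u : Circle) : ℂ) := by
  have hab : a ≤ b := le_trans hu.1 hu.2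
  set φ : ℝ → ℝ := fun w => arg ((f w / f a : Circle) : ℂ) with hφ
  have hratio : ∀ w ∈ Icc a b, ∀ w' ∈ Icc a b, ((f w / f w' : Circle) : ℂ) ≠ -1 := by
    intro w hw w' hw' hc
    exact hsep w w' hw hw' ((div_coe_eq_neg_one_iff _ _).mp hc)
  have hcdiv : ∀ w' : ℝ, Continuous fun w => ((f w / f w' : Circle) : ℂ) :=
    fun w' => continuous_subtype_val.comp (hf.div' continuous_const)
  have hφcont : ContinuousOn φ (Icc a b) := by
    intro w hw
    have h1 : ContinuousAt (fun x => ((f x / f a : Circle) : ℂ)) w := (hcdiv a).continuousAt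
    have h2 : ContinuousAt arg ((f w / f a : Circle) : ℂ) :=
      Complex.continuousAt_arg (circle_mem_slitPlane (hratio w hw a ⟨le_refl a, hab⟩))
    exact (ContinuousAt.comp (g := arg)
      (f := fun x => ((f x / f a : Circle) : ℂ)) (x := w) h2 h1).continuousWithinAt
  have hexp : ∀ w, Circle.exp (φ w) = f w / f a := fun w => Circle.exp_arg _
  have hlift : ∀ w w' : ℝ, Circle.exp (φ w - φ w') = f w / f w' := by
    intro w w'
    rw [cexp_sub, hexp, hexp]
    apply Subtype.ext
    push_cast
    field_simp
  have hne : ∀ w ∈ Icc u v, φ w - φ u ≠ π ∧ φ w - φ u ≠ -π := by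
    intro w hw
    have hw' : w ∈ Icc a b := ⟨le_trans hu.1 hw.1, le_trans hw.2 hv.2⟩
    constructor <;> intro hc
    · apply hsep w u hw' hu
      apply (div_coe_eq_neg_one_iff (f w) (f u)).mp
      rw [← hlift w u, hc, Circle.coe_exp]
      exact_mod_cast Complex.exp_pi_mul_I
    · apply hsep w u hw' hu
      apply (div_coe_eq_neg_one_iff (f w) (f u)).mp
      rw [← hlift w u, hc, Circle.coe_exp]
      push_cast
      rw [neg_mul, Complex.exp_neg, Complex.exp_pi_mul_I]
      norm_num
  have himg : φ v - φ u ∈ Ioo (-π) π := by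
    set ψ : ℝ → ℝ := fun w => φ w - φ u with hψ
    have hψc : ContinuousOn ψ (Icc u v) :=
      (hφcont.mono (Icc_subset_Icc hu.1 hv.2)).sub continuousOn_const
    have hconn : IsPreconnected (ψ '' Icc u v) := (isPreconnected_Icc).image ψ hψc
    have h0 : (0:ℝ) ∈ ψ '' Icc u v := ⟨u, ⟨le_refl u, huv⟩, by simp [hψ]⟩
    have hvmem : ψ v ∈ ψ '' Icc u v := ⟨v, ⟨huv, le_refl v⟩, rfl⟩
    have hord := hconn.ordConnected
    constructor
    · by_contra hcon
      push_neg at hcon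
      have : -π ∈ ψ '' Icc u v := hord.out hvmem h0 ⟨hcon, by linarith [pi_pos]⟩
      obtain ⟨w, hw, hwπ⟩ := this
      exact (hne w hw).2 hwπ
    · by_contra hcon
      push_neg at hcon
      have : π ∈ ψ '' Icc u v := hord.out h0 hvmem ⟨by linarith [pi_pos], hcon⟩
      obtain ⟨w, hw, hwπ⟩ := this
      exact (hne w hw).1 hwπ
  have hA : arg ((f v / f u : Circle) : ℂ) ∈ Ioo (-π) π := by
    refine ⟨Complex.neg_pi_lt_arg _, lt_of_le_of_ne (Complex.arg_le_pi _) ?_⟩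
    exact (Complex.mem_slitPlane_iff_arg.mp (circle_mem_slitPlane (hratio v hv u hu))).1
  have hdiff : Circle.exp (φ v - φ u) = Circle.exp (arg ((f v / f u : Circle) : ℂ)) := by
    rw [hlift, Circle.exp_arg]
  obtain ⟨m, hm⟩ := Circle.exp_eq_exp.mp hdiff
  have hm0 : m = 0 := by
    have h1 : (-1 : ℝ) < m := by nlinarith [himg.1, himg.2, hA.1, hA.2, pi_pos]
    have h2 : (m : ℝ) < 1 := by nlinarith [himg.1, himg.2, hA.1, hA.2, pi_pos]
    have h1' : (-1 : ℤ) < m := by exact_mod_cast h1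
    have h2' : m < (1 : ℤ) := by exact_mod_cast h2
    omega
  rw [hm0] at hm
  simpa [hφ] using hm

/-- Block refinement: the arg of a ratio over a safe interval equals the sum of arg increments
over any uniform refinement. -/
lemma arg_block (f : ℝ → Circle) (hf : Continuous f) {a b : ℝ} (hab : a ≤ b)
    (hsep : ∀ u v, u ∈ Icc a b → v ∈ Icc a b → (f u : ℂ) ≠ -(f v : ℂ))
    (m : ℕ) (hm : 0 < m) :
    arg ((f b / f a : Circle) : ℂ)
      = ∑ j ∈ Finset.range m,
          arg ((f (a + ((j : ℝ) + 1) * (b - a) / m) / f (a + (j : ℝ) * (b - a) / m) : Circle) : ℂ) := by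
  have hm' : (0:ℝ) < m := by exact_mod_cast hm
  have hwmem : ∀ j : ℕ, j ≤ m → a + (j : ℝ) * (b - a) / m ∈ Icc a b := by
    intro j hj
    have hj' : (j : ℝ) ≤ m := by exact_mod_cast hj
    constructor
    · have : 0 ≤ (j : ℝ) * (b - a) / m := by
        apply div_nonneg (mul_nonneg (Nat.cast_nonneg _) (by linarith)) (le_of_lt hm')
      linarith
    · have : (j : ℝ) * (b - a) / m ≤ b - a := by
        rw [div_le_iff₀ hm']
        nlinarith [Nat.cast_nonneg (α := ℝ) j]
      linarith
  set g : ℕ → ℝ := fun j => arg ((f (a + (j : ℝ) * (b - a) / m) / f a : Circle) : ℂ) with hg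
  have hterm : ∀ j ∈ Finset.range m,
      arg ((f (a + ((j : ℝ) + 1) * (b - a) / m) / f (a + (j : ℝ) * (b - a) / m) : Circle) : ℂ)
        = g (j + 1) - g j := by
    intro j hj
    rw [Finset.mem_range] at hj
    have hle : a + (j : ℝ) * (b - a) / m ≤ a + ((j : ℝ) + 1) * (b - a) / m := by
      have : (j : ℝ) * (b - a) / m ≤ ((j : ℝ) + 1) * (b - a) / m := by
        apply div_mono_aux ?_ hm'
        nlinarith
      linarith
    have hvmem : a + ((j : ℝ) + 1) * (b - a) / m ∈ Icc a b := by
      have := hwmem (j + 1) hj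
      push_cast at this
      exact this
    have hkey := arg_sub_arg f hf hsep (hwmem j (le_of_lt hj)) hvmem hle
    rw [hg]
    simp only [Nat.cast_add, Nat.cast_one]
    linarith [hkey]
  rw [Finset.sum_congr rfl hterm, Finset.sum_range_sub g m]
  have hwm : a + (m : ℝ) * (b - a) / m = b := by field_simp; ring
  have hw0 : a + (0 : ℝ) * (b - a) / m = a := by ring
  rw [hg]
  simp only [Nat.cast_zero, hwm, hw0]
  have h1 : ((f a / f a : Circle) : ℂ) = 1 := by
    rw [div_self']
    rfl
  rw [h1, Complex.arg_one, sub_zero]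

lemma sum_range_mul' (g : ℕ → ℝ) (n m : ℕ) :
    ∑ i ∈ Finset.range (n * m), g i
      = ∑ k ∈ Finset.range n, ∑ j ∈ Finset.range m, g (k * m + j) := by
  induction n with
  | zero => simp
  | succ n ih =>
      rw [Nat.succ_mul, Finset.sum_range_add, ih, Finset.sum_range_succ]

lemma Sarg_mul (f : ℝ → Circle) (hf : Continuous f) {n : ℕ} (hv : SValid f n)
    (m : ℕ) (hm : 0 < m) : Sarg f (n * m) = Sarg f n := by
  obtain ⟨hn, hsep⟩ := hv
  have hn' : (0:ℝ) < n := by exact_mod_cast hn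
  have hm' : (0:ℝ) < m := by exact_mod_cast hm
  unfold Sarg
  rw [sum_range_mul']
  apply Finset.sum_congr rfl
  intro k hk
  rw [Finset.mem_range] at hk
  have hk1 : (k : ℝ) + 1 ≤ n := by exact_mod_cast hk
  have hsub : Icc ((k : ℝ) / n) (((k : ℝ) + 1) / n) ⊆ Icc (0:ℝ) 1 := by
    apply Set.Icc_subset_Icc
    · positivity
    · rw [div_le_one hn']; linarith
  have hsep' : ∀ u v, u ∈ Icc ((k : ℝ) / n) (((k : ℝ) + 1) / n) →
      v ∈ Icc ((k : ℝ) / n) (((k : ℝ) + 1) / n) → (f u : ℂ) ≠ -(f v : ℂ) := by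
    intro u v hu hv
    apply hsep u v (hsub hu) (hsub hv)
    have hwidth : ((k : ℝ) + 1) / n - (k : ℝ) / n = 1 / n := by field_simp; ring
    rw [abs_sub_le_iff]
    constructor <;> [skip; skip] <;> · rw [← hwidth]; linarith [hu.1, hu.2, hv.1, hv.2]
  have hab : (k : ℝ) / n ≤ ((k : ℝ) + 1) / n := by
    apply div_mono_aux ?_ hn'
    linarith
  rw [arg_block f hf hab hsep' m hm]
  apply Finset.sum_congr rfl
  intro j hj
  have e1 : ((k * m + j : ℕ) : ℝ) / ((n * m : ℕ) : ℝ)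
      = (k : ℝ) / n + (j : ℝ) * (((k : ℝ) + 1) / n - (k : ℝ) / n) / m := by
    push_cast
    field_simp
    ring
  have e2 : ((k * m + j : ℕ) : ℝ) + 1 = ((k * m + j + 1 : ℕ) : ℝ) := by push_cast; ring
  have e3 : ((k * m + j + 1 : ℕ) : ℝ) / ((n * m : ℕ) : ℝ)
      = (k : ℝ) / n + ((j : ℝ) + 1) * (((k : ℝ) + 1) / n - (k : ℝ) / n) / m := by
    push_cast
    field_simp
    ring
  rw [e2, e3, e1]

lemma Sarg_eq (f : ℝ → Circle) (hf : Continuous f) {n m : ℕ}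
    (hvn : SValid f n) (hvm : SValid f m) : Sarg f n = Sarg f m := by
  rw [← Sarg_mul f hf hvn m hvm.1, ← Sarg_mul f hf hvm n hvn.1, Nat.mul_comm]

lemma exp_Sarg (f : ℝ → Circle) {n : ℕ} (hn : 0 < n) :
    Circle.exp (Sarg f n) = f 1 / f 0 := by
  unfold Sarg
  rw [cexp_sum]
  have hterm : ∀ k ∈ Finset.range n,
      Circle.exp (arg ((f (((k : ℝ) + 1) / n) / f ((k : ℝ) / n) : Circle) : ℂ))
        = (fun j : ℕ => f ((j : ℝ) / n)) (k + 1) / (fun j : ℕ => f ((j : ℝ) / n)) k := by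
    intro k _
    rw [Circle.exp_arg]
    push_cast
    rfl
  rw [Finset.prod_congr rfl hterm, Finset.prod_range_div (fun j : ℕ => f ((j : ℝ) / n)) n]
  have hn' : (n : ℝ) ≠ 0 := by positivity
  simp [div_self hn']

lemma Sarg_reverse (f g : ℝ → Circle) {n : ℕ} (hv : SValid f n)
    (hg : ∀ x ∈ Icc (0:ℝ) 1, g x = f (1 - x)) :
    Sarg g n = - Sarg f n := by
  obtain ⟨hn, hsep⟩ := hv
  have hn' : (0:ℝ) < n := by exact_mod_cast hn
  unfold Sarg
  rw [← Finset.sum_range_reflect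
    (fun k => arg ((f (((k : ℝ) + 1) / n) / f ((k : ℝ) / n) : Circle) : ℂ)) n, ← Finset.sum_neg_distrib]
  apply Finset.sum_congr rfl
  intro k hk
  rw [Finset.mem_range] at hk
  have hk1 : (k : ℝ) + 1 ≤ n := by exact_mod_cast hk
  have hmem1 : ((k : ℝ) + 1) / n ∈ Icc (0:ℝ) 1 := by
    constructor
    · positivity
    · rw [div_le_one hn']; linarith
  have hmem0 : (k : ℝ) / n ∈ Icc (0:ℝ) 1 := by
    constructor
    · positivity
    · rw [div_le_one hn']; linarith
  have hj : ((n - 1 - k : ℕ) : ℝ) = (n : ℝ) - 1 - k := by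
    have hsub : n - 1 - k = n - (1 + k) := by omega
    rw [hsub, Nat.cast_sub (by omega : 1 + k ≤ n)]
    push_cast
    ring
  have e1 : (1 : ℝ) - ((k : ℝ) + 1) / n = ((n - 1 - k : ℕ) : ℝ) / n := by
    rw [hj]; field_simp; try ring
  have e2 : (1 : ℝ) - (k : ℝ) / n = (((n - 1 - k : ℕ) : ℝ) + 1) / n := by
    rw [hj]; field_simp; try ring
  rw [hg _ hmem1, hg _ hmem0, e1, e2]
  set j : ℕ := n - 1 - k with hjdef
  have hjmem1 : ((j : ℝ) + 1) / n ∈ Icc (0:ℝ) 1 := by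
    have : (j : ℝ) + 1 ≤ n := by rw [hj]; linarith [Nat.cast_nonneg (α := ℝ) k]
    constructor
    · positivity
    · rw [div_le_one hn']; linarith
  have hjmem0 : (j : ℝ) / n ∈ Icc (0:ℝ) 1 := by
    have : (j : ℝ) + 1 ≤ n := by rw [hj]; linarith [Nat.cast_nonneg (α := ℝ) k]
    constructor
    · positivity
    · rw [div_le_one hn']; linarith
  have hdist : |((j : ℝ) + 1) / n - (j : ℝ) / n| ≤ 1 / n := by
    have : ((j : ℝ) + 1) / n - (j : ℝ) / n = 1 / n := by field_simp; ring
    rw [this, abs_of_pos (by positivity)]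
  have hne := hsep _ _ hjmem1 hjmem0 hdist
  have hne' : ((f (((j : ℝ) + 1) / n) / f ((j : ℝ) / n) : Circle) : ℂ) ≠ -1 :=
    fun hc => hne ((div_coe_eq_neg_one_iff _ _).mp hc)
  have hinv : (f ((j : ℝ) / n) / f (((j : ℝ) + 1) / n) : Circle)
      = (f (((j : ℝ) + 1) / n) / f ((j : ℝ) / n) : Circle)⁻¹ := by
    rw [inv_div]
  rw [hinv, Circle.coe_inv, Complex.arg_inv,
    if_neg (Complex.mem_slitPlane_iff_arg.mp (circle_mem_slitPlane hne')).1]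

/-! ### Winding number of a circle-valued path -/

/-- Extend a path on `I` to all of `ℝ` via the projection onto `[0,1]`. -/
def pathFun (γ : C(unitInterval, Circle)) : ℝ → Circle :=
  fun u => γ (Set.projIcc 0 1 zero_le_one u)

lemma pathFun_continuous (γ : C(unitInterval, Circle)) : Continuous (pathFun γ) :=
  γ.continuous.comp continuous_projIcc

lemma exists_good (γ : C(unitInterval, Circle)) :
    ∃ n : ℕ, 0 < n ∧ ∀ u v : ℝ, u ∈ Icc (0:ℝ) 1 → v ∈ Icc (0:ℝ) 1 → |u - v| ≤ 1 / n →
      dist (pathFun γ u) (pathFun γ v) < 1 := by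
  have hc := IsCompact.uniformContinuousOn_of_continuous (isCompact_Icc (a := (0:ℝ)) (b := 1))
    (pathFun_continuous γ).continuousOn
  replace hc := Metric.uniformContinuousOn_iff.mp hc
  obtain ⟨δ, hδ, h⟩ := hc 1 one_pos
  obtain ⟨n, hn⟩ := exists_nat_one_div_lt hδ
  refine ⟨n + 1, Nat.succ_pos n, fun u v hu hv huv => h u hu v hv ?_⟩
  rw [Real.dist_eq]
  have : (1 : ℝ) / ((n : ℝ) + 1) = 1 / ((n + 1 : ℕ) : ℝ) := by push_cast; ring
  rw [this] at hn
  linarith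

/-- A valid mesh for the path `γ`, with room to spare. -/
def windN (γ : C(unitInterval, Circle)) : ℕ := (exists_good γ).choose

lemma windN_spec (γ : C(unitInterval, Circle)) :
    0 < windN γ ∧ ∀ u v : ℝ, u ∈ Icc (0:ℝ) 1 → v ∈ Icc (0:ℝ) 1 → |u - v| ≤ 1 / windN γ →
      dist (pathFun γ u) (pathFun γ v) < 1 := (exists_good γ).choose_spec

lemma windN_valid (γ : C(unitInterval, Circle)) : SValid (pathFun γ) (windN γ) :=
  ⟨(windN_spec γ).1, fun u v hu hv h =>
    circle_ne_neg_of_dist_lt (lt_trans ((windN_spec γ).2 u v hu hv h) one_lt_two)⟩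

/-- The total winding (lift increment) of a path in the circle. -/
def wind (γ : C(unitInterval, Circle)) : ℝ := Sarg (pathFun γ) (windN γ)

lemma wind_eq (γ : C(unitInterval, Circle)) {n : ℕ} (hv : SValid (pathFun γ) n) :
    Sarg (pathFun γ) n = wind γ :=
  Sarg_eq _ (pathFun_continuous γ) hv (windN_valid γ)

lemma pathFun_zero (γ : C(unitInterval, Circle)) : pathFun γ 0 = γ 0 := by
  unfold pathFun
  congr 1
  apply Subtype.ext
  rw [Set.projIcc_left]
  simp

lemma pathFun_one (γ : C(unitInterval, Circle)) : pathFun γ 1 = γ 1 := by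
  unfold pathFun
  congr 1
  apply Subtype.ext
  rw [Set.projIcc_right]
  simp

lemma exp_wind (γ : C(unitInterval, Circle)) : Circle.exp (wind γ) = γ 1 / γ 0 := by
  rw [wind, exp_Sarg _ (windN_valid γ).1, pathFun_zero, pathFun_one]

end SqMPR

end WindingTheory

open SqMPR Set

/-- A subset of `S¹ × S¹` is symmetric if `(x, y) ∈ V` implies `(y, x) ∈ V`. -/
def IsSymmetricSet (V : Set (Circle × Circle)) : Prop :=
  ∀ x y : Circle, (x, y) ∈ V → (y, x) ∈ V

/-- `s` is a symmetric motion planning rule on `V ⊆ S¹ × S¹`: a continuous map from `V`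
to the path space `C(I, S¹) = PS¹` (carrying the compact-open topology), sending each
`(x, y) ∈ V` to a path from `x` to `y`, such that `s (y, x)` is the time-reversal of
`s (x, y)`. -/
def IsSymmetricMPR (V : Set (Circle × Circle)) (s : V → C(unitInterval, Circle)) : Prop :=
  Continuous s ∧
  (∀ p : V, s p 0 = p.1.1 ∧ s p 1 = p.1.2) ∧
  (∀ (x y : Circle) (hxy : (x, y) ∈ V) (hyx : (y, x) ∈ V) (t : unitInterval),
    s ⟨(y, x), hyx⟩ t = s ⟨(x, y), hxy⟩ (σ t))

/-- The quotient map `ρ : I × I → S¹ × S¹`, `ρ(t, t´) = (e^{2πit}, e^{2πit´})`. -/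
noncomputable def rho (p : unitInterval × unitInterval) : Circle × Circle :=
  (Circle.exp (2 * π * p.1), Circle.exp (2 * π * p.2))

/-- To a symmetric motion planning rule on a symmetric open set `V ⊆ S¹ × S¹` one can
associate a continuous (locally constant) function `d : ρ⁻¹(V) → ℤ` with
`d(t,1) - d(t,0) = -1`, `d(1,t) - d(0,t) = 1`, and `d(t',t) = -d(t,t')`. -/
theorem exists_d_function (V : Set (Circle × Circle)) (hVopen : IsOpen V)
    (hVsym : IsSymmetricSet V) (s : V → C(unitInterval, Circle))
    (hs : IsSymmetricMPR V s) :
    ∃ d : (rho ⁻¹' V) → ℤ,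
      Continuous d ∧
      (∀ (t : unitInterval) (h0 : (t, (0 : unitInterval)) ∈ rho ⁻¹' V)
        (h1 : (t, (1 : unitInterval)) ∈ rho ⁻¹' V),
        d ⟨(t, 1), h1⟩ - d ⟨(t, 0), h0⟩ = -1) ∧
      (∀ (t : unitInterval) (h0 : ((0 : unitInterval), t) ∈ rho ⁻¹' V)
        (h1 : ((1 : unitInterval), t) ∈ rho ⁻¹' V),
        d ⟨(1, t), h1⟩ - d ⟨(0, t), h0⟩ = 1) ∧
      (∀ (t t' : unitInterval) (h : (t, t') ∈ rho ⁻¹' V) (h' : (t', t) ∈ rho ⁻¹' V),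
        d ⟨(t', t), h'⟩ = - d ⟨(t, t'), h⟩) := by
  obtain ⟨hscont, hsend, hssym⟩ := hs
  have h2π : (2 * π) ≠ 0 := by positivity
  -- the inclusion map of the preimage into V
  have hrho : Continuous rho := by
    unfold rho
    exact (Circle.exp.continuous.comp
        (continuous_const.mul (continuous_subtype_val.comp continuous_fst))).prodMk
      (Circle.exp.continuous.comp
        (continuous_const.mul (continuous_subtype_val.comp continuous_snd)))
  set q : (rho ⁻¹' V) → V := fun p => ⟨rho p.1, p.2⟩ with hq
  have hqcont : Continuous q := Continuous.subtype_mk (hrho.comp continuous_subtype_val) _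
  set γp : (rho ⁻¹' V) → C(unitInterval, Circle) := fun p => s (q p) with hγp
  have hγcont : Continuous γp := hscont.comp hqcont
  have hW : ∀ p : (rho ⁻¹' V),
      Circle.exp (2 * π * (p.1.1 : ℝ) + wind (γp p)) = Circle.exp (2 * π * (p.1.2 : ℝ)) := by
    intro p
    rw [Circle.exp_add, exp_wind]
    have h0 : γp p 0 = Circle.exp (2 * π * (p.1.1 : ℝ)) := (hsend (q p)).1
    have h1 : γp p 1 = Circle.exp (2 * π * (p.1.2 : ℝ)) := (hsend (q p)).2
    rw [h0, h1]
    apply Subtype.ext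
    rw [Circle.coe_mul, Circle.coe_div]
    rw [mul_div_assoc'] 
    rw [mul_comm]
    rw [mul_div_assoc]
    rw [div_self (Circle.coe_ne_zero _), mul_one]
  have hWd : ∀ p : (rho ⁻¹' V), ∃ k : ℤ,
      2 * π * (p.1.1 : ℝ) + wind (γp p) = 2 * π * (p.1.2 : ℝ) + k * (2 * π) :=
    fun p => Circle.exp_eq_exp.mp (hW p)
  choose d hd using hWd
  refine ⟨d, ?_, ?_, ?_, ?_⟩
  · -- Continuity
    refine continuous_iff_continuousAt.mpr (fun p₀ => ?_)
    set n := windN (γp p₀) with hn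
    obtain ⟨hnpos, hgood⟩ := windN_spec (γp p₀)
    set U : Set (rho ⁻¹' V) := {p | dist (γp p) (γp p₀) < 1/2} with hUdef
    have hUopen : IsOpen U := isOpen_lt (hγcont.dist continuous_const) continuous_const
    have hp₀U : p₀ ∈ U := by simp [hUdef]
    have hUvalid : ∀ p ∈ U, SValid (pathFun (γp p)) n := by
      intro p hp
      refine ⟨hnpos, fun u v hu hv huv => ?_⟩
      apply circle_ne_neg_of_dist_lt
      have b1 : dist (pathFun (γp p) u) (pathFun (γp p₀) u) ≤ dist (γp p) (γp p₀) :=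
        ContinuousMap.dist_apply_le_dist _
      have b2 : dist (pathFun (γp p₀) v) (pathFun (γp p) v) ≤ dist (γp p₀) (γp p) :=
        ContinuousMap.dist_apply_le_dist _
      have b3 := hgood u v hu hv huv
      have hsym : dist (γp p₀) (γp p) = dist (γp p) (γp p₀) := dist_comm _ _
      calc dist (pathFun (γp p) u) (pathFun (γp p) v)
          ≤ dist (pathFun (γp p) u) (pathFun (γp p₀) u)
            + dist (pathFun (γp p₀) u) (pathFun (γp p₀) v)
            + dist (pathFun (γp p₀) v) (pathFun (γp p) v) := dist_triangle4 _ _ _ _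
        _ < 1/2 + 1 + 1/2 := by
            have hpU : dist (γp p) (γp p₀) < 1/2 := hp
            rw [hsym] at b2
            linarith
        _ = 2 := by norm_num
    set w : (rho ⁻¹' V) → ℝ := fun p =>
      (2 * π * (p.1.1 : ℝ) + Sarg (pathFun (γp p)) n - 2 * π * (p.1.2 : ℝ)) / (2 * π) with hwdef
    have hvd : ∀ p ∈ U, (d p : ℝ) = w p := by
      intro p hp
      have hwind : Sarg (pathFun (γp p)) n = wind (γp p) := wind_eq (γp p) (hUvalid p hp)
      rw [hwdef]
      dsimp only
      rw [hwind]
      have := hd p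
      field_simp
      linarith [hd p]
    have hwcont : ContinuousAt w p₀ := by
      apply ContinuousAt.div_const
      apply ContinuousAt.sub
      apply ContinuousAt.add
      · exact (continuous_const.mul (continuous_subtype_val.comp
          (continuous_fst.comp continuous_subtype_val))).continuousAt
      · unfold Sarg
        apply tendsto_finset_sum
        intro k hk
        rw [Finset.mem_range] at hk
        have hn' : (0:ℝ) < n := by exact_mod_cast hnpos
        have hk1 : (k : ℝ) + 1 ≤ n := by exact_mod_cast hk
        have hmem1 : ((k : ℝ) + 1) / n ∈ Icc (0:ℝ) 1 :=
          ⟨by positivity, by rw [div_le_one hn']; linarith⟩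
        have hmem0 : (k : ℝ) / n ∈ Icc (0:ℝ) 1 :=
          ⟨by positivity, by rw [div_le_one hn']; linarith⟩
        have hdist : |((k : ℝ) + 1) / n - (k : ℝ) / n| ≤ 1 / n := by
          have : ((k : ℝ) + 1) / n - (k : ℝ) / n = 1 / n := by field_simp; ring
          rw [this, abs_of_pos (by positivity)]
        have hne := (hUvalid p₀ hp₀U).2 _ _ hmem1 hmem0 hdist
        have hslit : ((pathFun (γp p₀) (((k : ℝ) + 1) / n) / pathFun (γp p₀) ((k : ℝ) / n)
            : Circle) : ℂ) ∈ Complex.slitPlane :=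
          circle_mem_slitPlane (fun hc => hne ((div_coe_eq_neg_one_iff _ _).mp hc))
        have hc1 : Continuous fun p : ↥(rho ⁻¹' V) =>
            ((pathFun (γp p) (((k : ℝ) + 1) / n) : Circle) : ℂ) :=
          continuous_subtype_val.comp ((continuous_eval_const _).comp hγcont)
        have hc2 : Continuous fun p : ↥(rho ⁻¹' V) =>
            ((pathFun (γp p) ((k : ℝ) / n) : Circle) : ℂ) :=
          continuous_subtype_val.comp ((continuous_eval_const _).comp hγcont)
        have hcc : Continuous fun p => ((pathFun (γp p) (((k : ℝ) + 1) / n)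
            / pathFun (γp p) ((k : ℝ) / n) : Circle) : ℂ) :=
          hc1.div hc2 (fun p => Circle.coe_ne_zero _)
        exact ContinuousAt.comp (g := Complex.arg)
          (f := fun p => ((pathFun (γp p) (((k : ℝ) + 1) / n)
            / pathFun (γp p) ((k : ℝ) / n) : Circle) : ℂ)) (x := p₀)
          (Complex.continuousAt_arg hslit) hcc.continuousAt
      · exact (continuous_const.mul (continuous_subtype_val.comp
          (continuous_snd.comp continuous_subtype_val))).continuousAt
    have heq : ∀ᶠ p in nhds p₀, d p = d p₀ := by
      have h1 : ∀ᶠ p in nhds p₀, p ∈ U := hUopen.mem_nhds hp₀U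
      have h2 : ∀ᶠ p in nhds p₀, |w p - w p₀| < 1/2 := by
        have := Metric.tendsto_nhds.mp hwcont (1/2) (by norm_num)
        simpa [Real.dist_eq] using this
      filter_upwards [h1, h2] with p hp hwp
      have e1 : (d p : ℝ) = w p := hvd p hp
      have e0 : (d p₀ : ℝ) = w p₀ := hvd p₀ hp₀U
      by_contra hne
      have hge : (1:ℤ) ≤ |d p - d p₀| := Int.one_le_abs (sub_ne_zero.mpr hne)
      have hge' : (1:ℝ) ≤ |(d p : ℝ) - (d p₀ : ℝ)| := by
        have : ((1:ℤ) : ℝ) ≤ ((|d p - d p₀| : ℤ) : ℝ) := by exact_mod_cast hge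
        rw [Int.cast_abs, Int.cast_sub] at this
        simpa using this
      rw [e1, e0] at hge'
      linarith
    have : nhds (d p₀) = pure (d p₀) := by rw [nhds_discrete]
    rw [ContinuousAt, this]
    exact Filter.tendsto_pure.mpr heq
  · -- d(t,1) - d(t,0) = -1
    intro t h0 h1
    have hqeq : q ⟨(t, 1), h1⟩ = q ⟨(t, 0), h0⟩ := by
      apply Subtype.ext
      show rho (t, 1) = rho (t, 0)
      unfold rho
      simp [Set.Icc.coe_one, Set.Icc.coe_zero]
    have hwind : wind (γp ⟨(t, 1), h1⟩) = wind (γp ⟨(t, 0), h0⟩) := by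
      rw [hγp]
      dsimp only
      rw [hqeq]
    have e1 := hd ⟨(t, 1), h1⟩
    have e0 := hd ⟨(t, 0), h0⟩
    simp only [Set.Icc.coe_one, Set.Icc.coe_zero, mul_one, mul_zero] at e1 e0
    have key : ((d ⟨(t, 1), h1⟩ : ℝ) - (d ⟨(t, 0), h0⟩ : ℝ)) * (2 * π)
        = (-1 : ℝ) * (2 * π) := by
      rw [hwind] at e1
      ring_nf at e1 e0 ⊢
      linarith
    have := mul_right_cancel₀ h2π key
    exact_mod_cast this
  · -- d(1,t) - d(0,t) = 1
    intro t h0 h1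
    have hqeq : q ⟨(1, t), h1⟩ = q ⟨(0, t), h0⟩ := by
      apply Subtype.ext
      show rho (1, t) = rho (0, t)
      unfold rho
      simp [Set.Icc.coe_one, Set.Icc.coe_zero]
    have hwind : wind (γp ⟨(1, t), h1⟩) = wind (γp ⟨(0, t), h0⟩) := by
      rw [hγp]
      dsimp only
      rw [hqeq]
    have e1 := hd ⟨(1, t), h1⟩
    have e0 := hd ⟨(0, t), h0⟩
    simp only [Set.Icc.coe_one, Set.Icc.coe_zero, mul_one, mul_zero] at e1 e0
    have key : ((d ⟨(1, t), h1⟩ : ℝ) - (d ⟨(0, t), h0⟩ : ℝ)) * (2 * π)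
        = (1 : ℝ) * (2 * π) := by
      rw [hwind] at e1
      ring_nf at e1 e0 ⊢
      linarith
    have := mul_right_cancel₀ h2π key
    exact_mod_cast this
  · -- antisymmetry
    intro t t' h h'
    set p : (rho ⁻¹' V) := ⟨(t, t'), h⟩ with hpdef
    set p' : (rho ⁻¹' V) := ⟨(t', t), h'⟩ with hp'def
    have hrev : ∀ x ∈ Icc (0:ℝ) 1, pathFun (γp p') x = pathFun (γp p) (1 - x) := by
      intro x hx
      unfold pathFun
      have hx' : (1:ℝ) - x ∈ Icc (0:ℝ) 1 := ⟨by linarith [hx.2], by linarith [hx.1]⟩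
      have h1 : Set.projIcc (0:ℝ) 1 zero_le_one x = ⟨x, hx⟩ := Set.projIcc_of_mem _ hx
      have h2 : Set.projIcc (0:ℝ) 1 zero_le_one (1 - x) = σ ⟨x, hx⟩ := by
        rw [Set.projIcc_of_mem _ hx']
        apply Subtype.ext
        rw [unitInterval.coe_symm_eq]
      rw [h1, h2]
      exact hssym (Circle.exp (2 * π * (t : ℝ))) (Circle.exp (2 * π * (t' : ℝ))) h h' ⟨x, hx⟩
    have hvrev : SValid (pathFun (γp p')) (windN (γp p)) := by
      obtain ⟨hnpos, hsep⟩ := windN_valid (γp p)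
      refine ⟨hnpos, fun u v hu hv huv => ?_⟩
      have hu' : (1:ℝ) - u ∈ Icc (0:ℝ) 1 := ⟨by linarith [hu.2], by linarith [hu.1]⟩
      have hv' : (1:ℝ) - v ∈ Icc (0:ℝ) 1 := ⟨by linarith [hv.2], by linarith [hv.1]⟩
      rw [hrev u hu, hrev v hv]
      apply hsep _ _ hu' hv'
      have : (1 - u) - (1 - v) = -(u - v) := by ring
      rw [this, abs_neg]
      exact huv
    have hwrev : wind (γp p') = - wind (γp p) := by
      rw [← wind_eq (γp p') hvrev]
      exact Sarg_reverse _ _ (windN_valid (γp p)) hrev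
    have e1 := hd p
    have e2 := hd p'
    rw [hwrev] at e2
    have hcoord1 : ((p.1.1 : ℝ)) = (t : ℝ) := rfl
    have hcoord2 : ((p.1.2 : ℝ)) = (t' : ℝ) := rfl
    have hcoord3 : ((p'.1.1 : ℝ)) = (t' : ℝ) := rfl
    have hcoord4 : ((p'.1.2 : ℝ)) = (t : ℝ) := rfl
    rw [hcoord1, hcoord2] at e1
    rw [hcoord3, hcoord4] at e2
    have key : ((d p' : ℝ)) * (2 * π) = (-(d p : ℝ)) * (2 * π) := by
      ring_nf at e1 e2 ⊢
      linarith
    have := mul_right_cancel₀ h2π key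
    exact_mod_cast this
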